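/- Lower bound construction: for E = F = Z/(2k−1) and f_i(x) = x + i for i = 1,…,k, the conflict graph is the complete graph K_{2k−1}; hence every valid partition requires at least 2k−1 parts, even though all fibers have size 1. -/

import Mathlib

/-- Lower bound construction: for `E = F = ℤ/(2k-1)` (`k ≥ 2`) and
`f i (x) = x + i` for `i = 1, …, k` (encoded as `f i x = x + (i+1)` for
`i : Fin k`), all fibers have size 1, the conflict graph is complete (any two
distinct `x, y` satisfy `f p x = f q y` for some `p ≠ q`), and hence every
valid partition requires at least `2k - 1` parts. -/
theorem stmt8 (k : ℕ) (hk : 2 ≤ k)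
    (f : Fin k → ZMod (2 * k - 1) → ZMod (2 * k - 1))
    (hf : ∀ (i : Fin k) (x : ZMod (2 * k - 1)), f i x = x + ((i : ℕ) + 1 : ℕ)) :
    (∀ (i : Fin k) (z : ZMod (2 * k - 1)),
        ({x : ZMod (2 * k - 1) | f i x = z}).encard = 1) ∧
    (∀ x y : ZMod (2 * k - 1), x ≠ y → ∃ p q : Fin k, p ≠ q ∧ f p x = f q y) ∧
    (∀ (m : ℕ) (c : ZMod (2 * k - 1) → Fin m),
      (∀ (i : Fin m) (p q : Fin k), p < q →
        ∀ x y : ZMod (2 * k - 1), c x = i → c y = i → f p x ≠ f q y) →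
      2 * k - 1 ≤ m) := by
  haveI : NeZero (2 * k - 1) := ⟨by omega⟩
  have key : ∀ x y : ZMod (2 * k - 1), x ≠ y →
      ∃ p q : Fin k, p ≠ q ∧ f p x = f q y := by
    intro x y hxy
    set d := y - x with hd
    have hdne : d ≠ 0 := by
      simp [hd, sub_eq_zero]
      exact fun h => hxy h.symm
    have hvpos : 0 < d.val :=
      Nat.pos_of_ne_zero (fun h => hdne ((ZMod.val_eq_zero d).mp h))
    have hvlt : d.val < 2 * k - 1 := ZMod.val_lt d
    have hcast : ((d.val : ℕ) : ZMod (2 * k - 1)) = d := by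
      simp [ZMod.natCast_val, ZMod.cast_id]
    by_cases hsmall : d.val ≤ k - 1
    · refine ⟨⟨d.val, by omega⟩, ⟨0, by omega⟩, ?_, ?_⟩
      · intro h
        rw [Fin.ext_iff] at h
        simp only [Fin.val_mk] at h
        omega
      · rw [hf, hf]
        simp only [Fin.val_mk, Nat.cast_add, Nat.cast_one, Nat.cast_zero, hcast]
        rw [hd]
        ring
    · have h1 : 1 ≤ 2 * k - 1 - d.val := by omega
      have h2 : 2 * k - 1 - d.val < k := by omega
      refine ⟨⟨0, by omega⟩, ⟨2 * k - 1 - d.val, h2⟩, ?_, ?_⟩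
      · intro h
        rw [Fin.ext_iff] at h
        simp only [Fin.val_mk] at h
        omega
      · rw [hf, hf]
        have hsum : ((2 * k - 1 - d.val : ℕ) : ZMod (2 * k - 1)) + (d.val : ℕ) = 0 := by
          have : ((2 * k - 1 - d.val : ℕ) : ZMod (2 * k - 1)) + (d.val : ℕ)
              = ((2 * k - 1 : ℕ) : ZMod (2 * k - 1)) := by
            rw [← Nat.cast_add]
            congr 1
            omega
          rw [this, ZMod.natCast_self]
        have : ((2 * k - 1 - d.val : ℕ) : ZMod (2 * k - 1)) = -d := by
          linear_combination hsum - hcast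
        simp only [Fin.val_mk, Nat.cast_add, Nat.cast_one, Nat.cast_zero, this]
        rw [hd]
        ring
  refine ⟨?_, key, ?_⟩
  · intro i z
    have : {x : ZMod (2 * k - 1) | f i x = z} = {z - ((i : ℕ) + 1 : ℕ)} := by
      ext x
      simp [hf, eq_sub_iff_add_eq]
    rw [this, Set.encard_singleton]
  · intro m c hc
    have hinj : Function.Injective c := by
      intro x y hxy
      by_contra hne
      obtain ⟨p, q, hpq, hfpq⟩ := key x y hne
      rcases lt_or_gt_of_ne hpq with h | h
      · exact hc (c y) p q h x y hxy rfl hfpq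
      · exact hc (c x) q p h y x hxy.symm rfl hfpq.symm
    have := Fintype.card_le_of_injective c hinj
    simpa [ZMod.card] using this
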